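/- The disjoint union poset P₂ = (⋃_{n∈ω}(ω+2)) ∪ (⋃_{n∈ω}(ω+4)), consisting of countably many chains of type ω+2 and countably many chains of type ω+4, is not reversible. -/

import Mathlib

open Ordinal Sum

/-- A poset is reversible iff every bijective homomorphism (monotone bijection) of it to
itself is an automorphism (i.e. its inverse is also monotone). -/
def Reversible (P : Type*) [PartialOrder P] : Prop :=
  ∀ f : P → P, Function.Bijective f → Monotone f → ∀ x y : P, f x ≤ f y → x ≤ y

/-- `ω + c` is order isomorphic to `ℕ ⊕ₗ Fin c`. -/
noncomputable def eIso (c : ℕ) (o : Ordinal.{0}) (ho : o = omega0.{0} + c) :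
    o.ToType ≃o ℕ ⊕ₗ Fin c := by
  subst ho
  haveI hw : IsWellOrder (ℕ ⊕ₗ Fin c) (· < ·) :=
    (inferInstance : IsWellOrder (ℕ ⊕ Fin c) (Sum.Lex (· < ·) (· < ·)))
  have h : type ((· < ·) : (ℕ ⊕ₗ Fin c) → _ → Prop) = omega0.{0} + c := by
    have e : type ((· < ·) : (ℕ ⊕ₗ Fin c) → _ → Prop)
        = type (Sum.Lex ((· < ·) : ℕ → ℕ → Prop) ((· < ·) : Fin c → Fin c → Prop)) := rfl
    rw [e, type_sum_lex, type_nat_lt, type_fin]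
  exact OrderIso.ofRelIsoLT
    (((@Ordinal.type_eq _ _ _ _ isWellOrder_lt hw).1 ((type_toType _).trans h.symm)).some)

/-- Condense two copies of `ω + 2` onto one copy of `ω + 4`. -/
def mFwd : (ℕ ⊕ Fin 2) ⊕ (ℕ ⊕ Fin 2) → ℕ ⊕ Fin 4
  | .inl (.inl n) => .inl (2 * n)
  | .inl (.inr i) => .inr (i.castLE (by norm_num))
  | .inr (.inl n) => .inl (2 * n + 1)
  | .inr (.inr i) => .inr ⟨(i : ℕ) + 2, by omega⟩

/-- The inverse of `mFwd`. -/
def mBwd : ℕ ⊕ Fin 4 → (ℕ ⊕ Fin 2) ⊕ (ℕ ⊕ Fin 2)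
  | .inl n => if n % 2 = 0 then .inl (.inl (n / 2)) else .inr (.inl (n / 2))
  | .inr i => if h : (i : ℕ) < 2 then .inl (.inr ⟨i, h⟩) else .inr (.inr ⟨(i : ℕ) - 2, by omega⟩)

lemma mBwd_mFwd (x : (ℕ ⊕ Fin 2) ⊕ (ℕ ⊕ Fin 2)) : mBwd (mFwd x) = x := by
  rcases x with (n | i) | (n | i)
  · simp [mFwd, mBwd]
  · simp [mFwd, mBwd]
    exact Nat.lt_succ_iff.mp i.isLt
  · have h2 : (2 * n + 1) / 2 = n := by omega
    simp [mFwd, mBwd]; exact h2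
  · simp [mFwd, mBwd]

lemma mFwd_mBwd (y : ℕ ⊕ Fin 4) : mFwd (mBwd y) = y := by
  rcases y with n | i
  · by_cases h : n % 2 = 0 <;> simp [mFwd, mBwd, h] <;> omega
  · by_cases h : (i : ℕ) < 2
    · simp [mFwd, mBwd, h]
    · simp [mFwd, mBwd, h]
      exact Fin.ext (by simp; omega)

lemma mono1 {a b : ℕ ⊕ₗ Fin 2} (h : a ≤ b) :
    (toLex (mFwd (.inl (ofLex a))) : ℕ ⊕ₗ Fin 4) ≤ toLex (mFwd (.inl (ofLex b))) := by
  rcases h with h | h | h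
  · exact Sum.Lex.inl_le_inl_iff.2 (by omega)
  · exact Sum.Lex.inr_le_inr_iff.2 (by simpa using h)
  · exact Sum.Lex.sep _ _

lemma mono2 {a b : ℕ ⊕ₗ Fin 2} (h : a ≤ b) :
    (toLex (mFwd (.inr (ofLex a))) : ℕ ⊕ₗ Fin 4) ≤ toLex (mFwd (.inr (ofLex b))) := by
  rcases h with h | h | h
  · exact Sum.Lex.inl_le_inl_iff.2 (by omega)
  · exact Sum.Lex.inr_le_inr_iff.2 (Fin.mk_le_mk.2 (Nat.add_le_add_right (Fin.le_def.1 h) 2))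
  · exact Sum.Lex.sep _ _

/-- The disjoint union poset P₂ = (⋃_{n∈ω}(ω+2)) ∪ (⋃_{n∈ω}(ω+4)),
consisting of countably many chains of type ω+2 (indexed by (true, n)) and countably many
chains of type ω+4 (indexed by (false, n)), is not reversible. -/
theorem stmt17 :
    ¬ Reversible (Σ p : Bool × ℕ, (Ordinal.omega0.{0} + cond p.1 2 4).ToType) := by
  classical
  set P := Σ p : Bool × ℕ, (Ordinal.omega0.{0} + cond p.1 2 4).ToType with hP
  let e2 : (Ordinal.omega0.{0} + cond true 2 4).ToType ≃o ℕ ⊕ₗ Fin 2 :=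
    eIso 2 _ (by norm_num)
  let e4 : (Ordinal.omega0.{0} + cond false 2 4).ToType ≃o ℕ ⊕ₗ Fin 4 :=
    eIso 4 _ (by norm_num)
  let fwd : P → P := fun z =>
    match z with
    | ⟨(true, 0), x⟩ => ⟨(false, 0), e4.symm (toLex (mFwd (.inl (ofLex (e2 x)))))⟩
    | ⟨(true, 1), x⟩ => ⟨(false, 0), e4.symm (toLex (mFwd (.inr (ofLex (e2 x)))))⟩
    | ⟨(true, n + 2), x⟩ => ⟨(true, n), x⟩
    | ⟨(false, n), x⟩ => ⟨(false, n + 1), x⟩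
  let bwd : P → P := fun z =>
    match z with
    | ⟨(true, n), x⟩ => ⟨(true, n + 2), x⟩
    | ⟨(false, 0), x⟩ =>
      match mBwd (ofLex (e4 x)) with
      | .inl y => ⟨(true, 0), e2.symm (toLex y)⟩
      | .inr y => ⟨(true, 1), e2.symm (toLex y)⟩
    | ⟨(false, n + 1), x⟩ => ⟨(false, n), x⟩
  have hleft : ∀ z, bwd (fwd z) = z := by
    rintro ⟨⟨b, n⟩, x⟩
    match b, n with
    | true, 0 =>
      show (match mBwd (ofLex (e4 (e4.symm (toLex (mFwd (.inl (ofLex (e2 x)))))))) with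
        | .inl y => (⟨(true, 0), e2.symm (toLex y)⟩ : P)
        | .inr y => ⟨(true, 1), e2.symm (toLex y)⟩) = ⟨(true, 0), x⟩
      rw [OrderIso.apply_symm_apply]
      show (match mBwd (mFwd (.inl (ofLex (e2 x)))) with
        | .inl y => (⟨(true, 0), e2.symm (toLex y)⟩ : P)
        | .inr y => ⟨(true, 1), e2.symm (toLex y)⟩) = ⟨(true, 0), x⟩
      rw [mBwd_mFwd]
      show (⟨(true, 0), e2.symm (toLex (ofLex (e2 x)))⟩ : P) = ⟨(true, 0), x⟩
      simp
    | true, 1 =>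
      show (match mBwd (ofLex (e4 (e4.symm (toLex (mFwd (.inr (ofLex (e2 x)))))))) with
        | .inl y => (⟨(true, 0), e2.symm (toLex y)⟩ : P)
        | .inr y => ⟨(true, 1), e2.symm (toLex y)⟩) = ⟨(true, 1), x⟩
      rw [OrderIso.apply_symm_apply]
      show (match mBwd (mFwd (.inr (ofLex (e2 x)))) with
        | .inl y => (⟨(true, 0), e2.symm (toLex y)⟩ : P)
        | .inr y => ⟨(true, 1), e2.symm (toLex y)⟩) = ⟨(true, 1), x⟩
      rw [mBwd_mFwd]
      show (⟨(true, 1), e2.symm (toLex (ofLex (e2 x)))⟩ : P) = ⟨(true, 1), x⟩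
      simp
    | true, (n + 2) => rfl
    | false, n => rfl
  have hright : ∀ z, fwd (bwd z) = z := by
    rintro ⟨⟨b, n⟩, x⟩
    match b, n with
    | true, n => rfl
    | false, 0 =>
      rcases hy : mBwd (ofLex (e4 x)) with y | y
      · show fwd (match mBwd (ofLex (e4 x)) with
          | .inl y => (⟨(true, 0), e2.symm (toLex y)⟩ : P)
          | .inr y => ⟨(true, 1), e2.symm (toLex y)⟩) = ⟨(false, 0), x⟩
        rw [hy]
        show (⟨(false, 0), e4.symm (toLex (mFwd (.inl (ofLex (e2 (e2.symm (toLex y)))))))⟩ : P)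
          = ⟨(false, 0), x⟩
        rw [OrderIso.apply_symm_apply]
        have : mFwd (.inl (ofLex (toLex y))) = ofLex (e4 x) := by
          rw [show (ofLex (toLex y) : ℕ ⊕ Fin 2) = y from rfl, ← hy, mFwd_mBwd]
        rw [this]
        simp
      · show fwd (match mBwd (ofLex (e4 x)) with
          | .inl y => (⟨(true, 0), e2.symm (toLex y)⟩ : P)
          | .inr y => ⟨(true, 1), e2.symm (toLex y)⟩) = ⟨(false, 0), x⟩
        rw [hy]
        show (⟨(false, 0), e4.symm (toLex (mFwd (.inr (ofLex (e2 (e2.symm (toLex y)))))))⟩ : P)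
          = ⟨(false, 0), x⟩
        rw [OrderIso.apply_symm_apply]
        have : mFwd (.inr (ofLex (toLex y))) = ofLex (e4 x) := by
          rw [show (ofLex (toLex y) : ℕ ⊕ Fin 2) = y from rfl, ← hy, mFwd_mBwd]
        rw [this]
        simp
    | false, (n + 1) => rfl
  have hbij : Function.Bijective fwd :=
    (Equiv.mk fwd bwd hleft hright).bijective
  have hmono : Monotone fwd := by
    rintro z1 z2 ⟨⟨b, n⟩, a, c, hac⟩
    match b, n with
    | true, 0 => exact Sigma.mk_le_mk_iff.2 (e4.symm.monotone (mono1 (e2.monotone hac)))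
    | true, 1 => exact Sigma.mk_le_mk_iff.2 (e4.symm.monotone (mono2 (e2.monotone hac)))
    | true, (n + 2) => exact Sigma.mk_le_mk_iff.2 hac
    | false, n => exact Sigma.mk_le_mk_iff.2 hac
  intro hrev
  have key := hrev fwd hbij hmono
    ⟨(true, 0), e2.symm (toLex (.inl 0))⟩ ⟨(true, 1), e2.symm (toLex (.inl 0))⟩
  have hle : fwd ⟨(true, 0), e2.symm (toLex (.inl 0))⟩
      ≤ fwd ⟨(true, 1), e2.symm (toLex (.inl 0))⟩ := by
    show (⟨(false, 0), e4.symm (toLex (mFwd (.inl (ofLex (e2 (e2.symm (toLex (.inl 0))))))))⟩ : P)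
      ≤ ⟨(false, 0), e4.symm (toLex (mFwd (.inr (ofLex (e2 (e2.symm (toLex (.inl 0))))))))⟩
    refine Sigma.mk_le_mk_iff.2 (e4.symm.monotone ?_)
    rw [OrderIso.apply_symm_apply]
    exact @Sum.Lex.inl_le_inl_iff ℕ (Fin 4) _ _ (2 * 0) (2 * 0 + 1) |>.2 (Nat.le_succ _)
  exact absurd (key hle) (by rintro ⟨⟩)
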